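/- arXiv:2112.11310 — 2 statements merged into one kernel-verified Lean document; each statement's English description precedes it below -/
import Mathlib

section
/- If u = g_0 g_1 ⋯ g_n is a downhill in G(X)^+, then u·(reverse of u) ≈ g_0 in FT¹(X), where the reverse of g_0⋯g_n is the word g_n⋯g_0. -/
/-! Common definitions: the construction of `G(X)`, words, the congruence `ρ`,
the monoid `FT¹(X)`, landscapes, mountains, the maps `β₁, β₂, β`, Green's
relations, sandwich sets, etc. -/

/-- Nested triples over `X` together with the extra symbol `1`. -/
inductive PreG (X : Type) : Type where
  | one : PreG X
  | base : X → PreG X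
  | node : PreG X → PreG X → PreG X → PreG X

namespace PreG

variable {X : Type}

/-- The height `⋏(g)`. -/
def ht : PreG X → ℕ
  | one => 0
  | base _ => 1
  | node l _ _ => ht l + 1

/-- The left entry `g^l` (with `1^l = 1` and `x^l = 1` for `x ∈ X`). -/
def left : PreG X → PreG X
  | one => one
  | base _ => one
  | node l _ _ => l

/-- The right entry `g^r`. -/
def right : PreG X → PreG X
  | one => one
  | base _ => one
  | node _ _ r => r

/-- The central entry `g^c` (with `x^c = x` for `x ∈ X` via `x = (1,x,1)`). -/
def center : PreG X → PreG X
  | one => one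
  | base x => base x
  | node _ c _ => c

/-- Membership in `G(X) = ⋃_{i≥0} G_i(X)`. -/
inductive IsG : PreG X → Prop
  | one : IsG one
  | base (x : X) : IsG (base x)
  | node {l c r : PreG X} :
      IsG l → IsG c → IsG r →
      1 ≤ l.ht → l.ht = r.ht → c.ht + 1 = l.ht →
      l ≠ r →
      (c = l.left ∨ c = l.right) →
      (c = r.left ∨ c = r.right) →
      IsG (node l c r)

theorem IsG.left_isG {g : PreG X} (h : g.IsG) : g.left.IsG := by
  cases h with
  | one => exact .one
  | base x => exact .one
  | node hl hc hr h1 h2 h3 h4 h5 h6 => exact hl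

theorem IsG.right_isG {g : PreG X} (h : g.IsG) : g.right.IsG := by
  cases h with
  | one => exact .one
  | base x => exact .one
  | node hl hc hr h1 h2 h3 h4 h5 h6 => exact hr

theorem IsG.center_isG {g : PreG X} (h : g.IsG) : g.center.IsG := by
  cases h with
  | one => exact .one
  | base x => exact .base x
  | node hl hc hr h1 h2 h3 h4 h5 h6 => exact hc

/-- The ground `ε(g)`. -/
def ground : PreG X → Set (PreG X)
  | one => {one}
  | base x => {one, base x}
  | node l c r => ground l ∪ {node l c r} ∪ ground r

end PreG

/-- The set `G(X)`. -/
def Gx (X : Type) : Type := {g : PreG X // g.IsG}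

namespace Gx

variable {X : Type}

/-- The letter `1`. -/
def gone : Gx X := ⟨PreG.one, .one⟩

instance : Inhabited (Gx X) := ⟨gone⟩

/-- The letter corresponding to `x ∈ X`. -/
def ofX (x : X) : Gx X := ⟨PreG.base x, .base x⟩

/-- `g^l`. -/
def l (g : Gx X) : Gx X := ⟨g.1.left, g.2.left_isG⟩

/-- `g^c`. -/
def c (g : Gx X) : Gx X := ⟨g.1.center, g.2.center_isG⟩

/-- `g^r`. -/
def r (g : Gx X) : Gx X := ⟨g.1.right, g.2.right_isG⟩

/-- The height of `g`. -/
def ht (g : Gx X) : ℕ := g.1.ht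

theorem ht_c_lt : ∀ {g : Gx X}, 2 ≤ g.ht → g.c.ht < g.ht := by
  rintro ⟨g0, hg⟩ h
  cases hg with
  | one => simp [Gx.ht, PreG.ht] at h
  | base x => simp [Gx.ht, PreG.ht] at h
  | node hl hc hr hht hlr hc1 hne hcl hcr =>
    simp only [Gx.ht, Gx.c, PreG.center, PreG.ht] at *
    omega

/-- The step relation of an uphill: `a ∈ {b^l, b^r}` for consecutive letters `a b`. -/
def stepUp (a b : Gx X) : Prop := a = b.l ∨ a = b.r

/-- The step relation of a downhill: `b ∈ {a^l, a^r}` for consecutive letters `a b`. -/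
def stepDown (a b : Gx X) : Prop := b = a.l ∨ b = a.r

/-- The left hill `λ_l(g)` of the mountain `β₁(g)`. -/
def lamL (g : Gx X) : List (Gx X) :=
  if h : 2 ≤ g.ht then lamL g.c ++ [g.l, g]
  else if g.ht = 0 then [g] else [gone, g]
termination_by g.ht
decreasing_by exact ht_c_lt h

/-- The right hill `λ_r(g)` of the mountain `β₁(g)`. -/
def lamR (g : Gx X) : List (Gx X) :=
  if h : 2 ≤ g.ht then [g, g.r] ++ lamR g.c
  else if g.ht = 0 then [g] else [g, gone]
termination_by g.ht
decreasing_by exact ht_c_lt h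

end Gx

/-- The free semigroup `G(X)⁺` on `G(X)`. -/
abbrev Wd (X : Type) := FreeSemigroup (Gx X)

namespace Wd

variable {X : Type}

/-- The one-letter word. -/
def og (g : Gx X) : Wd X := FreeSemigroup.of g

/-- The list of letters of a word. -/
def toL (w : Wd X) : List (Gx X) := w.head :: w.tail

/-- The word with a given (nonempty) list of letters. -/
def ofL (w : List (Gx X)) : Wd X := ⟨w.headI, w.tail⟩

end Wd

/-- The generating relation `ρ_e ∪ ρ_s`. -/
def rhoBase (X : Type) : Wd X → Wd X → Prop := fun a b =>
  (∃ g : Gx X,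
     (a = Wd.og Gx.gone * Wd.og g ∧ b = Wd.og g) ∨
     (a = Wd.og g * Wd.og Gx.gone ∧ b = Wd.og g) ∨
     (a = Wd.og g * Wd.og g ∧ b = Wd.og g)) ∨
  (∃ g : Gx X, 2 ≤ g.ht ∧
     ((a = Wd.og g.c * Wd.og g.l * Wd.og g ∧ b = Wd.og g) ∨
      (a = Wd.og g * Wd.og g.r * Wd.og g.c ∧ b = Wd.og g) ∨
      (a = Wd.og g.r * Wd.og g.c * Wd.og g * Wd.og g.c * Wd.og g.l ∧
       b = Wd.og g.r * Wd.og g.c * Wd.og g.l)))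

/-- The congruence `ρ`: the smallest congruence containing `ρ_e ∪ ρ_s`. -/
def rho (X : Type) : Con (Wd X) := conGen (rhoBase X)

/-- The monoid `FT¹(X) = G(X)⁺/ρ`. -/
abbrev FT1 (X : Type) := (rho X).Quotient

/-- The `ρ`-class `[u]` of a word `u`. -/
def cls {X : Type} (u : Wd X) : FT1 X := (u : FT1 X)

/-- `FT(X) = FT¹(X) ∖ {[1]}`, as a subset of `FT¹(X)`. -/
def FTset (X : Type) : Set (FT1 X) := {a | a ≠ cls (Wd.og Gx.gone)}

section Landscapes

variable {X : Type}

/-- Landscapes (as nonempty lists of letters). -/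
def IsLandL (w : List (Gx X)) : Prop :=
  w ≠ [] ∧ w.Chain' (fun a b => Gx.stepUp a b ∨ Gx.stepDown a b)

/-- Uphills. -/
def IsUphillL (w : List (Gx X)) : Prop := w ≠ [] ∧ w.Chain' Gx.stepUp

/-- Downhills. -/
def IsDownhillL (w : List (Gx X)) : Prop := w ≠ [] ∧ w.Chain' Gx.stepDown

/-- No letter is a river. -/
def RiverFreeL : List (Gx X) → Prop
  | a :: b :: c :: t =>
      ¬(a.ht = b.ht + 1 ∧ c.ht = b.ht + 1) ∧ RiverFreeL (b :: c :: t)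
  | _ => True

/-- Mountains: landscapes with endpoints `1` and no rivers. -/
def IsMountainL (w : List (Gx X)) : Prop :=
  IsLandL w ∧ w.head? = some Gx.gone ∧ w.getLast? = some Gx.gone ∧ RiverFreeL w

/-- The set `M¹(X)` of all mountains. -/
def MSet (X : Type) : Set (List (Gx X)) := {w | IsMountainL w}

/-- `u * v`: concatenation merging the repeated junction letter. -/
def mergeL (u v : List (Gx X)) : List (Gx X) := u ++ v.tail

open Classical in
/-- The maximal initial uphill `λ_l` of a landscape. -/
noncomputable def maxUp : List (Gx X) → List (Gx X)
  | a :: b :: t => if Gx.stepUp a b then a :: maxUp (b :: t) else [a]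
  | w => w

/-- The maximal final downhill `λ_r` of a landscape. -/
noncomputable def lamRL (w : List (Gx X)) : List (Gx X) := (maxUp w.reverse).reverse

/-- The peak `κ` of a mountain. -/
noncomputable def peakL (w : List (Gx X)) : Gx X := (maxUp w).getLast?.getD Gx.gone

/-- `β₁` on a letter: the mountain `λ_l(g) * λ_r(g)`. -/
def beta1g (g : Gx X) : List (Gx X) := mergeL (Gx.lamL g) (Gx.lamR g)

/-- `β₁` on a word: `β₁(g₀) * ⋯ * β₁(g_n)`. -/
def beta1L : List (Gx X) → List (Gx X)
  | [] => []
  | [g] => beta1g g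
  | g :: t => mergeL (beta1g g) (beta1L t)

/-- One uplifting of a river. -/
def UpStep (u v : List (Gx X)) : Prop :=
  ∃ (p s : List (Gx X)) (a b c : Gx X),
    u = p ++ a :: b :: c :: s ∧ a.ht = b.ht + 1 ∧ c.ht = b.ht + 1 ∧
    ((a = c ∧ v = p ++ a :: s) ∨
     (a ≠ c ∧ ∃ d : Gx X, d.1 = PreG.node c.1 b.1 a.1 ∧ v = p ++ a :: d :: c :: s))

/-- The reflexive and transitive closure `→*` of uplifting of rivers. -/
def UpStar : List (Gx X) → List (Gx X) → Prop := Relation.ReflTransGen UpStep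

open Classical in
/-- `β₂(u)`: the unique landscape with no rivers reachable from `u` by
upliftings of rivers. -/
noncomputable def beta2L (u : List (Gx X)) : List (Gx X) :=
  if h : ∃ v, UpStar u v ∧ RiverFreeL v ∧ IsLandL v then h.choose else u

/-- `β(u) = β₂(β₁(u))`. -/
noncomputable def betaL (u : List (Gx X)) : List (Gx X) := beta2L (beta1L u)

/-- The operation `⊙` on mountains: `u ⊙ v = β₂(u * v)`. -/
noncomputable def odotL (u v : List (Gx X)) : List (Gx X) := beta2L (mergeL u v)

/-- Valleys: a downhill followed by an uphill (junction merged). -/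
def IsValleyL (w : List (Gx X)) : Prop :=
  ∃ d u : List (Gx X), IsDownhillL d ∧ IsUphillL u ∧ d.getLast? = u.head? ∧
    w = mergeL d u

/-- Canyons: valleys with equal endpoints. -/
def IsCanyonL (w : List (Gx X)) : Prop := IsValleyL w ∧ w.head? = w.getLast?

/-- Gorges: canyons `w` with `w →* σ(w)`. -/
def IsGorgeL (w : List (Gx X)) : Prop :=
  IsCanyonL w ∧ ∃ a, w.head? = some a ∧ UpStar w [a]

end Landscapes

section Green

variable {X : Type}

/-- `a ≤_R b`. -/
def leR (a b : FT1 X) : Prop := ∃ m, a = b * m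

/-- `a ≤_L b`. -/
def leL (a b : FT1 X) : Prop := ∃ m, a = m * b

/-- `a ≤_J b`. -/
def leJ (a b : FT1 X) : Prop := ∃ m n, a = m * b * n

/-- The right ideal `aM`. -/
def rSet (a : FT1 X) : Set (FT1 X) := {x | ∃ m, x = a * m}

/-- The left ideal `Ma`. -/
def lSet (a : FT1 X) : Set (FT1 X) := {x | ∃ m, x = m * a}

/-- The two-sided ideal `MaM`. -/
def jSet (a : FT1 X) : Set (FT1 X) := {x | ∃ m n, x = m * a * n}

/-- Green's relation `R`. -/
def GreenR (a b : FT1 X) : Prop := rSet a = rSet b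

/-- Green's relation `L`. -/
def GreenL (a b : FT1 X) : Prop := lSet a = lSet b

/-- Green's relation `J`. -/
def GreenJ (a b : FT1 X) : Prop := jSet a = jSet b

/-- Green's relation `H = L ∩ R`. -/
def GreenH (a b : FT1 X) : Prop := GreenR a b ∧ GreenL a b

/-- Green's relation `D = L ∨ R` (join as equivalence relations). -/
def GreenD : FT1 X → FT1 X → Prop :=
  Relation.EqvGen (fun a b => GreenL a b ∨ GreenR a b)

/-- The natural partial order on a regular semigroup: `s ≤ t` iff
`s = et = tf` for some idempotents `e`, `f`. -/
def natLe (s t : FT1 X) : Prop :=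
  ∃ e f : FT1 X, e * e = e ∧ f * f = f ∧ s = e * t ∧ s = t * f

end Green

/-- The sandwich set `S(e, f)`. -/
def sandwich {S : Type*} [Mul S] (e f : S) : Set S :=
  {h | h * h = h ∧ f * h = h ∧ h * e = h ∧ e * h * f = e * f}

/-- Skeleton mappings `φ : G(X) → E(S¹)`. -/
def IsSkeletonMap {X : Type} {S : Type} [Semigroup S] (φ : Gx X → WithOne S) : Prop :=
  (Function.Injective fun x : X => φ (Gx.ofX x)) ∧
  (∀ x : X, ∃ s : S, s * s = s ∧ φ (Gx.ofX x) = (s : WithOne S)) ∧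
  (∀ g : Gx X, φ g * φ g = φ g) ∧
  (∀ g : Gx X, g.ht = 1 → φ Gx.gone * φ g = φ g ∧ φ g * φ Gx.gone = φ g) ∧
  (∀ g : Gx X, 2 ≤ g.ht → φ g ∈ sandwich (φ g.r * φ g.c) (φ g.c * φ g.l))

section Statement2Aux

variable {X : Type}

lemma rel_cls {u v : Wd X} (h : rhoBase X u v) : (cls u : FT1 X) = cls v :=
  (Con.eq _).mpr (ConGen.Rel.of u v h)

lemma idem_cls (g : Gx X) : (cls (Wd.og g) : FT1 X) * cls (Wd.og g) = cls (Wd.og g) := by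
  have := rel_cls (X := X) (Or.inl ⟨g, Or.inr (Or.inr ⟨rfl, rfl⟩)⟩)
  simpa [cls, Con.coe_mul] using this

lemma lr_gone {a : Gx X} (h : ¬ 2 ≤ a.ht) : a.l = Gx.gone ∧ a.r = Gx.gone := by
  obtain ⟨g, hg⟩ := a
  cases hg with
  | one => exact ⟨Subtype.ext rfl, Subtype.ext rfl⟩
  | base x => exact ⟨Subtype.ext rfl, Subtype.ext rfl⟩
  | node hl hc hr h1 h2 h3 h4 h5 h6 =>
    exfalso
    simp only [Gx.ht, PreG.ht] at h
    omega

lemma aba {a b : Gx X} (h : Gx.stepDown a b) :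
    (cls (Wd.og a) : FT1 X) * cls (Wd.og b) * cls (Wd.og a) = cls (Wd.og a) := by
  by_cases h2 : 2 ≤ a.ht
  · set A : FT1 X := cls (Wd.og a) with hA
    set L : FT1 X := cls (Wd.og a.l) with hL
    set C : FT1 X := cls (Wd.og a.c) with hC
    set R : FT1 X := cls (Wd.og a.r) with hR
    have rel1 : C * (L * A) = A := by
      have := rel_cls (X := X) (Or.inr ⟨a, h2, Or.inl ⟨rfl, rfl⟩⟩)
      simp only [cls, Con.coe_mul] at this
      simpa [hA, hL, hC, cls, mul_assoc] using this
    have rel2 : A * (R * C) = A := by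
      have := rel_cls (X := X) (Or.inr ⟨a, h2, Or.inr (Or.inl ⟨rfl, rfl⟩)⟩)
      simp only [cls, Con.coe_mul] at this
      simpa [hA, hR, hC, cls, mul_assoc] using this
    have rel3 : R * (C * (A * (C * L))) = R * (C * L) := by
      have := rel_cls (X := X) (Or.inr ⟨a, h2, Or.inr (Or.inr ⟨rfl, rfl⟩)⟩)
      simp only [cls, Con.coe_mul] at this
      simpa [hA, hL, hR, hC, cls, mul_assoc] using this
    have idm : A * A = A := idem_cls a
    have key : A * (R * (C * (L * A))) = A := by
      have step1 : A * (R * (C * (L * A))) = A * ((R * (C * (A * (C * L)))) * A) := by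
        rw [rel3]; simp [mul_assoc]
      rw [step1]
      have : A * ((R * (C * (A * (C * L)))) * A) = (A * (R * C)) * (A * (C * (L * A))) := by
        simp [mul_assoc]
      rw [this, rel2, rel1, idm]
      exact idm
    rcases h with rfl | rfl
    · -- b = a.l
      have h1 : A * L * A = (A * (R * C)) * (L * A) := by rw [rel2, mul_assoc]
      have h2' : (A * (R * C)) * (L * A) = A := by
        rw [show (A * (R * C)) * (L * A) = A * (R * (C * (L * A))) by simp [mul_assoc]]
        exact key
      exact h1.trans h2'
    · -- b = a.r
      have h1 : A * R * A = (A * R) * (C * (L * A)) := by rw [rel1]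
      have h2' : (A * R) * (C * (L * A)) = A := by
        rw [show (A * R) * (C * (L * A)) = A * (R * (C * (L * A))) by simp [mul_assoc]]
        exact key
      exact h1.trans h2'
  · have hg := lr_gone h2
    have hb : b = Gx.gone := by rcases h with rfl | rfl; exacts [hg.1, hg.2]
    subst hb
    have hone : (cls (Wd.og a) : FT1 X) * cls (Wd.og Gx.gone) = cls (Wd.og a) := by
      have := rel_cls (X := X) (Or.inl ⟨a, Or.inr (Or.inl ⟨rfl, rfl⟩)⟩)
      simpa [cls, Con.coe_mul] using this
    rw [hone, idem_cls]

lemma ofL_append (u v : List (Gx X)) (hu : u ≠ []) (hv : v ≠ []) :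
    Wd.ofL (u ++ v) = Wd.ofL u * Wd.ofL v := by
  cases u with
  | nil => exact absurd rfl hu
  | cons x t =>
    cases v with
    | nil => exact absurd rfl hv
    | cons y s => rfl

end Statement2Aux

theorem statement2 {X : Type} [Nonempty X] (l : List (Gx X)) (hl : IsDownhillL l)
    (a : Gx X) (ha : l.head? = some a) :
    cls (Wd.ofL (l ++ l.reverse)) = cls (Wd.og a) := by
  induction l generalizing a with
  | nil => simp at ha
  | cons x t ih =>
    obtain rfl : a = x := by simpa using ha.symm
    cases t with
    | nil =>
      show cls (Wd.ofL [a, a]) = cls (Wd.og a)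
      have he : Wd.ofL [a, a] = Wd.og a * Wd.og a := rfl
      rw [he]
      have : (cls (Wd.og a * Wd.og a) : FT1 X) = cls (Wd.og a) * cls (Wd.og a) := by
        simp [cls, Con.coe_mul]
      rw [show (cls (Wd.og a * Wd.og a) : FT1 X) = cls (Wd.og a) * cls (Wd.og a) from this]
      exact idem_cls a
    | cons y s =>
      set m : List (Gx X) := y :: s with hm
      have hchain := (List.isChain_cons_cons.mp hl.2)
      have hstep : Gx.stepDown a y := hchain.1
      have hdown : IsDownhillL m := ⟨by simp [hm], hchain.2⟩
      have ihm : cls (Wd.ofL (m ++ m.reverse)) = cls (Wd.og y) :=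
        ih hdown y (by simp [hm])
      have hlist : (a :: m) ++ (a :: m).reverse = [a] ++ (m ++ m.reverse) ++ [a] := by
        simp
      rw [hlist]
      have hmm : m ++ m.reverse ≠ [] := by simp [hm]
      rw [ofL_append ([a] ++ (m ++ m.reverse)) [a] (by simp) (by simp),
          ofL_append [a] (m ++ m.reverse) (by simp) hmm]
      have hof : Wd.ofL [a] = Wd.og a := rfl
      rw [hof]
      have hcoe : (cls (Wd.og a * Wd.ofL (m ++ m.reverse) * Wd.og a) : FT1 X) =
          cls (Wd.og a) * cls (Wd.ofL (m ++ m.reverse)) * cls (Wd.og a) := by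
        simp [cls, Con.coe_mul]
      rw [hcoe, ihm]
      exact aba hstep
end

section
/- The monoid FT¹(X) is a regular monoid generated by the idempotents {[g] : g ∈ G(X)}, and for every landscape u consisting of an uphill followed by a downhill, [reverse of u] is an inverse of [u] (that is, [u][rev u][u] = [u] and [rev u][u][rev u] = [rev u]). -/
section S3aux
variable {X : Type}

/-- abbreviation for generator classes -/
abbrev eG (g : Gx X) : FT1 X := cls (Wd.og g)

lemma cls_mul (u v : Wd X) : cls (u * v) = cls u * cls v := rfl

lemma base_eq {u v : Wd X} (h : rhoBase X u v) : cls u = cls v :=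
  (Con.eq _).mpr (ConGen.Rel.of u v h)

lemma eG_idem (g : Gx X) : eG g * eG g = eG g :=
  base_eq (Or.inl ⟨g, Or.inr (Or.inr ⟨rfl, rfl⟩)⟩)

lemma one_mul_eG (g : Gx X) : eG (Gx.gone : Gx X) * eG g = eG g :=
  base_eq (Or.inl ⟨g, Or.inl ⟨rfl, rfl⟩⟩)

lemma eG_mul_one (g : Gx X) : eG g * eG (Gx.gone : Gx X) = eG g :=
  base_eq (Or.inl ⟨g, Or.inr (Or.inl ⟨rfl, rfl⟩)⟩)

lemma relA {g : Gx X} (h2 : 2 ≤ g.ht) : eG g.c * eG g.l * eG g = eG g :=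
  base_eq (Or.inr ⟨g, h2, Or.inl ⟨rfl, rfl⟩⟩)

lemma relB {g : Gx X} (h2 : 2 ≤ g.ht) : eG g * eG g.r * eG g.c = eG g :=
  base_eq (Or.inr ⟨g, h2, Or.inr (Or.inl ⟨rfl, rfl⟩)⟩)

lemma relC {g : Gx X} (h2 : 2 ≤ g.ht) :
    eG g.r * eG g.c * eG g * eG g.c * eG g.l = eG g.r * eG g.c * eG g.l :=
  base_eq (Or.inr ⟨g, h2, Or.inr (Or.inr ⟨rfl, rfl⟩)⟩)

lemma one_mul_cls (u : Wd X) : cls (Wd.og (Gx.gone : Gx X)) * cls u = cls u := by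
  induction u using FreeSemigroup.recOnMul with
  | ih1 x => exact one_mul_eG x
  | ih2 x y hx hy =>
    have : Wd.og (Gx.gone : Gx X) * (FreeSemigroup.of x * y)
        = (Wd.og (Gx.gone : Gx X) * FreeSemigroup.of x) * y := (mul_assoc _ _ _).symm
    calc cls (Wd.og (Gx.gone : Gx X)) * cls (FreeSemigroup.of x * y)
        = cls ((Wd.og (Gx.gone : Gx X) * FreeSemigroup.of x) * y) := by
          rw [← cls_mul, this]
      _ = cls (Wd.og (Gx.gone : Gx X) * FreeSemigroup.of x) * cls y := rfl
      _ = cls (FreeSemigroup.of x) * cls y := by rw [cls_mul]; exact congrArg (· * cls y) hx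
      _ = cls (FreeSemigroup.of x * y) := rfl

lemma cls_mul_one (u : Wd X) : cls u * cls (Wd.og (Gx.gone : Gx X)) = cls u := by
  induction u using FreeSemigroup.recOnMul with
  | ih1 x => exact eG_mul_one x
  | ih2 x y hx hy =>
    calc cls (FreeSemigroup.of x * y) * cls (Wd.og (Gx.gone : Gx X))
        = cls (FreeSemigroup.of x * (y * Wd.og (Gx.gone : Gx X))) :=
          congrArg cls (mul_assoc _ _ _)
      _ = cls (FreeSemigroup.of x) * (cls y * cls (Wd.og (Gx.gone : Gx X))) := rfl
      _ = cls (FreeSemigroup.of x) * cls y := by rw [hy]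
      _ = cls (FreeSemigroup.of x * y) := rfl

end S3aux
section S3aux2
variable {X : Type}

lemma ht_zero {g : Gx X} (h : g.ht = 0) : g = Gx.gone := by
  obtain ⟨g0, hg⟩ := g
  cases hg with
  | one => rfl
  | base x => simp [Gx.ht, PreG.ht] at h
  | node hl hc hr h1 h2 h3 h4 h5 h6 => simp [Gx.ht, PreG.ht] at h

lemma ht_one {g : Gx X} (h : g.ht = 1) : g.l = Gx.gone ∧ g.r = Gx.gone := by
  obtain ⟨g0, hg⟩ := g
  cases hg with
  | one => simp [Gx.ht, PreG.ht] at h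
  | base x => exact ⟨rfl, rfl⟩
  | node hl hc hr h1 h2 h3 h4 h5 h6 =>
    exfalso; simp only [Gx.ht, PreG.ht] at h; omega

lemma ht_l {g : Gx X} (h : 1 ≤ g.ht) : g.ht = g.l.ht + 1 := by
  obtain ⟨g0, hg⟩ := g
  cases hg with
  | one => simp [Gx.ht, PreG.ht] at h
  | base x => rfl
  | node hl hc hr h1 h2 h3 h4 h5 h6 => rfl

lemma ht_r {g : Gx X} (h : 1 ≤ g.ht) : g.ht = g.r.ht + 1 := by
  obtain ⟨g0, hg⟩ := g
  cases hg with
  | one => simp [Gx.ht, PreG.ht] at h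
  | base x => rfl
  | node hl hc hr h1 h2 h3 h4 h5 h6 =>
    show _ = _
    simp only [Gx.ht, Gx.r, PreG.ht, PreG.right]
    omega

lemma ht_lc {g : Gx X} (h : 2 ≤ g.ht) : g.l.ht = g.c.ht + 1 := by
  obtain ⟨g0, hg⟩ := g
  cases hg with
  | one => simp [Gx.ht, PreG.ht] at h
  | base x => simp [Gx.ht, PreG.ht] at h
  | node hl hc hr h1 h2 h3 h4 h5 h6 =>
    show _ = _
    simp only [Gx.ht, Gx.l, Gx.c, PreG.left, PreG.center]
    omega

lemma c_step_l {g : Gx X} (h : 2 ≤ g.ht) : g.c = g.l.l ∨ g.c = g.l.r := by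
  obtain ⟨g0, hg⟩ := g
  cases hg with
  | one => simp [Gx.ht, PreG.ht] at h
  | base x => simp [Gx.ht, PreG.ht] at h
  | node hl hc hr h1 h2 h3 h4 h5 h6 =>
    rcases h5 with h5 | h5
    · exact Or.inl (Subtype.ext h5)
    · exact Or.inr (Subtype.ext h5)

lemma c_step_r {g : Gx X} (h : 2 ≤ g.ht) : g.c = g.r.l ∨ g.c = g.r.r := by
  obtain ⟨g0, hg⟩ := g
  cases hg with
  | one => simp [Gx.ht, PreG.ht] at h
  | base x => simp [Gx.ht, PreG.ht] at h
  | node hl hc hr h1 h2 h3 h4 h5 h6 =>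
    rcases h6 with h6 | h6
    · exact Or.inl (Subtype.ext h6)
    · exact Or.inr (Subtype.ext h6)

lemma lemE {g : Gx X} (h2 : 2 ≤ g.ht) :
    eG g * eG g.r * eG g.c * eG g.l * eG g = eG g := by
  calc eG g * eG g.r * eG g.c * eG g.l * eG g
      = (eG g * eG g.r * (eG g.c * eG g.c)) * eG g.l * eG g := by rw [eG_idem g.c]
    _ = (eG g * eG g.r * eG g.c) * (eG g.c * eG g.l * eG g) := by simp only [mul_assoc]
    _ = eG g * eG g := by rw [relA h2, relB h2]
    _ = eG g := eG_idem g

lemma K1l {g : Gx X} (h2 : 2 ≤ g.ht) : eG g * eG g.l * eG g = eG g := by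
  calc eG g * eG g.l * eG g = (eG g * eG g.r * eG g.c) * eG g.l * eG g := by rw [relB h2]
    _ = eG g := lemE h2

lemma K1r {g : Gx X} (h2 : 2 ≤ g.ht) : eG g * eG g.r * eG g = eG g := by
  calc eG g * eG g.r * eG g = eG g * eG g.r * (eG g.c * eG g.l * eG g) := by rw [relA h2]
    _ = (eG g * eG g.r * eG g.c) * (eG g.l * eG g) := by simp only [mul_assoc]
    _ = eG g * (eG g.l * eG g) := by rw [relB h2]
    _ = eG g * eG g.l * eG g := (mul_assoc _ _ _).symm
    _ = eG g := K1l h2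

/-- key collapse lemma: `g h g = g` whenever `h ∈ {g^l, g^r}`. -/
lemma K1 {g h : Gx X} (hh : h = g.l ∨ h = g.r) : eG g * eG h * eG g = eG g := by
  by_cases h2 : 2 ≤ g.ht
  · rcases hh with rfl | rfl
    · exact K1l h2
    · exact K1r h2
  · interval_cases hht : g.ht
    · have hg : g = Gx.gone := ht_zero hht
      have : h = Gx.gone := by
        rcases hh with rfl | rfl <;> rw [hg] <;> rfl
      rw [hg, this, eG_idem, eG_idem]
    · have h1 := ht_one hht
      have : h = Gx.gone := by rcases hh with rfl | rfl; exacts [h1.1, h1.2]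
      rw [this, eG_mul_one, eG_idem]

/-- the uplift lemma. -/
lemma K2 {a b c : Gx X} (hab : b = a.l ∨ b = a.r) (hbc : b = c.l ∨ b = c.r)
    (ha : a.ht = b.ht + 1) (hc : c.ht = b.ht + 1) (hne : a ≠ c) :
    ∃ d : Gx X, d.l = c ∧ d.c = b ∧ d.r = a ∧ d.ht = b.ht + 2 ∧
      eG a * eG b * eG c = eG a * eG d * eG c := by
  have hisg : PreG.IsG (PreG.node c.1 b.1 a.1) := by
    refine PreG.IsG.node c.2 b.2 a.2 ?_ ?_ ?_ ?_ ?_ ?_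
    · show 1 ≤ c.ht; omega
    · show (c.ht : ℕ) = a.ht; omega
    · show (b.ht : ℕ) + 1 = c.ht; omega
    · exact fun h => hne (Subtype.ext h.symm)
    · rcases hbc with h | h
      · exact Or.inl (congrArg Subtype.val h)
      · exact Or.inr (congrArg Subtype.val h)
    · rcases hab with h | h
      · exact Or.inl (congrArg Subtype.val h)
      · exact Or.inr (congrArg Subtype.val h)
  set d : Gx X := ⟨PreG.node c.1 b.1 a.1, hisg⟩ with hd
  have hdl : d.l = c := Subtype.ext rfl
  have hdc : d.c = b := Subtype.ext rfl
  have hdr : d.r = a := Subtype.ext rfl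
  have hdht : d.ht = b.ht + 2 := by
    show (PreG.node c.1 b.1 a.1).ht = b.ht + 2
    show c.1.ht + 1 = b.ht + 2
    show (c.ht : ℕ) + 1 = b.ht + 2
    omega
  have h2 : 2 ≤ d.ht := by omega
  have Ad : eG b * eG c * eG d = eG d := by
    have := relA h2; rwa [hdl, hdc] at this
  have Bd : eG d * eG a * eG b = eG d := by
    have := relB h2; rwa [hdr, hdc] at this
  have Cd : eG a * eG b * eG d * eG b * eG c = eG a * eG b * eG c := by
    have := relC h2; rwa [hdl, hdc, hdr] at this
  have s1' : eG a * eG b * eG d = eG a * (eG b * eG c * eG d) := by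
    calc eG a * eG b * eG d
        = eG a * eG b * (eG b * eG c * eG d) := by rw [Ad]
      _ = (eG a * (eG b * eG b)) * (eG c * eG d) := by simp only [mul_assoc]
      _ = (eG a * eG b) * (eG c * eG d) := by rw [eG_idem b]
      _ = eG a * (eG b * eG c * eG d) := by simp only [mul_assoc]
  have s1 : eG a * eG d = eG a * eG b * eG d := by
    rw [s1']; rw [Ad]
  have t2 : eG d * eG b * eG c = eG d * eG a * eG b * eG c := by
    calc eG d * eG b * eG c = (eG d * eG a * eG b) * eG b * eG c := by rw [Bd]
      _ = (eG d * eG a) * (eG b * eG b) * eG c := by simp only [mul_assoc]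
      _ = (eG d * eG a) * eG b * eG c := by rw [eG_idem b]
  have s2 : eG d * eG c = eG d * eG b * eG c := by
    rw [t2]; rw [Bd]
  refine ⟨d, hdl, hdc, hdr, hdht, ?_⟩
  symm
  calc eG a * eG d * eG c = eG a * (eG d * eG c) := mul_assoc _ _ _
    _ = eG a * (eG d * eG b * eG c) := by rw [s2]
    _ = (eG a * eG d) * eG b * eG c := by simp only [mul_assoc]
    _ = (eG a * eG b * eG d) * eG b * eG c := by rw [s1]
    _ = eG a * eG b * eG c := Cd

end S3aux2
section S3lists
variable {X : Type}

/-- class of the word with given letters -/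
abbrev clsL (w : List (Gx X)) : FT1 X := cls (Wd.ofL w)

lemma clsL_singleton (a : Gx X) : clsL [a] = eG a := rfl

lemma clsL_cons (a : Gx X) {t : List (Gx X)} (h : t ≠ []) :
    clsL (a :: t) = eG a * clsL t := by
  cases t with
  | nil => exact absurd rfl h
  | cons b s => rfl

lemma clsL_append {u v : List (Gx X)} (hu : u ≠ []) (hv : v ≠ []) :
    clsL (u ++ v) = clsL u * clsL v := by
  cases u with
  | nil => exact absurd rfl hu
  | cons a t =>
    cases v with
    | nil => exact absurd rfl hv
    | cons b s => rfl

lemma head_absorb (a : Gx X) (t : List (Gx X)) :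
    eG a * clsL (a :: t) = clsL (a :: t) := by
  cases t with
  | nil => exact eG_idem a
  | cons b s =>
    rw [clsL_cons a (List.cons_ne_nil b s), ← mul_assoc, eG_idem a]

lemma last_absorb {u : List (Gx X)} {j : Gx X} (hj : u.getLast? = some j) :
    clsL u * eG j = clsL u := by
  rcases u.eq_nil_or_concat with rfl | ⟨L, b, rfl⟩
  · simp at hj
  · simp only [List.concat_eq_append] at hj ⊢
    rw [List.getLast?_concat] at hj
    obtain rfl : b = j := by injection hj
    cases L with
    | nil => exact eG_idem b
    | cons x L0 =>
      rw [clsL_append (List.cons_ne_nil x L0) (List.cons_ne_nil b []),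
        clsL_singleton, mul_assoc, eG_idem b]

/-- a downhill times its reverse collapses to its first letter -/
lemma VcollapseD : ∀ (t : List (Gx X)) (b : Gx X), (b :: t).Chain' Gx.stepDown →
    clsL (b :: t) * clsL (b :: t).reverse = eG b := by
  intro t
  induction t with
  | nil => intro b _; exact eG_idem b
  | cons c t0 ih =>
    intro b hch
    have hstep : Gx.stepDown b c := (List.isChain_cons_cons.mp hch).1
    have hch' : (c :: t0).Chain' Gx.stepDown := (List.isChain_cons_cons.mp hch).2
    have hne : (c :: t0).reverse ≠ [] := by simp
    calc clsL (b :: c :: t0) * clsL (b :: c :: t0).reverse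
        = (eG b * clsL (c :: t0)) * (clsL (c :: t0).reverse * eG b) := by
          rw [clsL_cons b (List.cons_ne_nil c t0)]
          rw [show (b :: c :: t0).reverse = (c :: t0).reverse ++ [b] from by simp]
          rw [clsL_append hne (List.cons_ne_nil b []), clsL_singleton]
      _ = eG b * (clsL (c :: t0) * clsL (c :: t0).reverse) * eG b := by
          simp only [mul_assoc]
      _ = eG b * eG c * eG b := by rw [ih c hch']
      _ = eG b := K1 hstep

lemma stepRev {u : List (Gx X)} (h : u.Chain' Gx.stepUp) :
    u.reverse.Chain' Gx.stepDown := by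
  refine List.isChain_reverse.mpr ?_
  exact h.imp (fun a b hab => hab)

lemma stepRev' {u : List (Gx X)} (h : u.Chain' Gx.stepDown) :
    u.reverse.Chain' Gx.stepUp := by
  refine List.isChain_reverse.mpr ?_
  exact h.imp (fun a b hab => hab)

/-- the reverse of an uphill times the uphill collapses to its last letter -/
lemma VcollapseU {u : List (Gx X)} (hch : u.Chain' Gx.stepUp) {j : Gx X}
    (hj : u.getLast? = some j) :
    clsL u.reverse * clsL u = eG j := by
  rcases u.eq_nil_or_concat with rfl | ⟨L, b, rfl⟩
  · simp at hj
  · simp only [List.concat_eq_append] at hj hch ⊢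
    rw [List.getLast?_concat] at hj
    obtain rfl : b = j := by injection hj
    have h1 : (L ++ [b]).reverse = b :: L.reverse := by simp
    have h2 : (b :: L.reverse).Chain' Gx.stepDown := by
      rw [← h1]; exact stepRev hch
    have := VcollapseD L.reverse b h2
    rw [show (b :: L.reverse).reverse = L ++ [b] from by simp] at this
    rw [h1]; exact this

end S3lists
section S3main15
variable {X : Type}

lemma merge_reverse {u d : List (Gx X)} (hu : u ≠ []) (hd : d ≠ [])
    (hj : u.getLast? = d.head?) :
    (mergeL u d).reverse = mergeL d.reverse u.reverse := by
  rcases u.eq_nil_or_concat with rfl | ⟨L, b, rfl⟩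
  · exact absurd rfl hu
  · cases d with
    | nil => exact absurd rfl hd
    | cons j d2 =>
      simp only [List.concat_eq_append] at hj ⊢
      rw [List.getLast?_concat] at hj
      obtain rfl : b = j := by injection hj
      simp [mergeL]

/-- the core of statement (5): `w (rev w) w = w` for an up-down landscape `w`. -/
lemma main15core {u d : List (Gx X)} (hu : IsUphillL u) (hd : IsDownhillL d)
    (hj : u.getLast? = d.head?) :
    clsL (mergeL u d) * clsL (mergeL u d).reverse * clsL (mergeL u d)
      = clsL (mergeL u d) := by
  obtain ⟨hune, hcu⟩ := hu
  obtain ⟨hdne, hcd⟩ := hd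
  cases d with
  | nil => exact absurd rfl hdne
  | cons j d' =>
    have hlast : u.getLast? = some j := hj
    rcases u.eq_nil_or_concat with rfl | ⟨u', b, rfl⟩
    · exact absurd rfl hune
    · simp only [List.concat_eq_append] at hlast hcu ⊢
      rw [List.getLast?_concat] at hlast
      obtain rfl : b = j := by injection hlast
      -- w = (u' ++ [b]) ++ d'
      have hF2 : clsL (u' ++ [b]).reverse * clsL (u' ++ [b]) = eG b :=
        VcollapseU hcu (List.getLast?_concat)
      have hF1 : clsL (b :: d') * clsL (b :: d').reverse = eG b :=
        VcollapseD d' b hcd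
      show clsL ((u' ++ [b]) ++ d') * clsL ((u' ++ [b]) ++ d').reverse *
          clsL ((u' ++ [b]) ++ d') = clsL ((u' ++ [b]) ++ d')
      cases d' with
      | nil =>
        simp only [List.append_nil]
        calc clsL (u' ++ [b]) * clsL (u' ++ [b]).reverse * clsL (u' ++ [b])
            = clsL (u' ++ [b]) * (clsL (u' ++ [b]).reverse * clsL (u' ++ [b])) :=
              mul_assoc _ _ _
          _ = clsL (u' ++ [b]) * eG b := by rw [hF2]
          _ = clsL (u' ++ [b]) := last_absorb (List.getLast?_concat)
      | cons c d0 =>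
        set dd : List (Gx X) := c :: d0 with hdd
        cases u' with
        | nil =>
          simp only [List.nil_append]
          calc clsL (b :: dd) * clsL (b :: dd).reverse * clsL (b :: dd)
              = eG b * clsL (b :: dd) := by rw [hF1]
            _ = clsL (b :: dd) := head_absorb b dd
        | cons x u0 =>
          set uu : List (Gx X) := x :: u0 with huu
          have huune : uu ≠ [] := List.cons_ne_nil x u0
          have hddne : dd ≠ [] := List.cons_ne_nil c d0
          have hrne : ∀ (l : List (Gx X)), l ≠ [] → l.reverse ≠ [] := by
            intro l hl; simpa using hl
          -- names
          set p := clsL uu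
          set q := clsL dd
          set pr := clsL uu.reverse
          set qr := clsL dd.reverse
          have e1 : clsL ((uu ++ [b]) ++ dd) = p * eG b * q := by
            rw [clsL_append (by simp [huu]) hddne, clsL_append huune (List.cons_ne_nil b []),
              clsL_singleton]
          have e2 : clsL ((uu ++ [b]) ++ dd).reverse = qr * eG b * pr := by
            have : ((uu ++ [b]) ++ dd).reverse = (dd.reverse ++ [b]) ++ uu.reverse := by simp
            rw [this, clsL_append (by simp [hdd]) (hrne uu huune),
              clsL_append (hrne dd hddne) (List.cons_ne_nil b []), clsL_singleton]
          have f1 : (eG b * q) * (qr * eG b) = eG b := by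
            have h1 : clsL (b :: dd) = eG b * q := clsL_cons b hddne
            have h2 : clsL (b :: dd).reverse = qr * eG b := by
              rw [show (b :: dd).reverse = dd.reverse ++ [b] from by simp,
                clsL_append (hrne dd hddne) (List.cons_ne_nil b []), clsL_singleton]
            rw [← h1, ← h2]; exact hF1
          have f2 : (eG b * pr) * (p * eG b) = eG b := by
            have h1 : clsL (uu ++ [b]) = p * eG b := by
              rw [clsL_append huune (List.cons_ne_nil b []), clsL_singleton]
            have h2 : clsL (uu ++ [b]).reverse = eG b * pr := by
              rw [show (uu ++ [b]).reverse = b :: uu.reverse from by simp,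
                clsL_cons b (hrne uu huune)]
            rw [← h1, ← h2]; exact hF2
          rw [e1, e2]
          calc p * eG b * q * (qr * eG b * pr) * (p * eG b * q)
              = p * ((eG b * q) * (qr * eG b)) * (pr * (p * (eG b * q))) := by
                simp only [mul_assoc]
            _ = p * eG b * (pr * (p * (eG b * q))) := by rw [f1]
            _ = p * ((eG b * pr) * (p * eG b)) * q := by simp only [mul_assoc]
            _ = p * eG b * q := by rw [f2]

end S3main15
section S3gs
variable {X : Type}

/-- uphill step with height bookkeeping -/
def SUp (a b : Gx X) : Prop := (a = b.l ∨ a = b.r) ∧ b.ht = a.ht + 1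
/-- downhill step with height bookkeeping -/
def SDown (a b : Gx X) : Prop := (b = a.l ∨ b = a.r) ∧ a.ht = b.ht + 1
/-- landscape step -/
def GS (a b : Gx X) : Prop := SUp a b ∨ SDown a b

lemma SUp.stepUp {a b : Gx X} (h : SUp a b) : Gx.stepUp a b := h.1
lemma SDown.stepDown {a b : Gx X} (h : SDown a b) : Gx.stepDown a b := h.1

def hsum (w : List (Gx X)) : ℕ := (w.map Gx.ht).sum

lemma hsum_cons (a : Gx X) (t : List (Gx X)) : hsum (a :: t) = a.ht + hsum t := rfl

lemma GS_ht {a b : Gx X} (h : GS a b) : b.ht ≤ a.ht + 1 := by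
  rcases h with ⟨_, h⟩ | ⟨_, h⟩ <;> omega

lemma hsum_le : ∀ (w : List (Gx X)), w.Chain' GS →
    hsum w ≤ (w.headI.ht + w.length) * w.length := by
  intro w
  induction w with
  | nil => intro _; simp [hsum]
  | cons a t ih =>
    intro hch
    cases t with
    | nil => simp [hsum, List.headI]
    | cons b t0 =>
      have hab : GS a b := (List.isChain_cons_cons.mp hch).1
      have ih2 := ih (List.isChain_cons_cons.mp hch).2
      have hb : b.ht ≤ a.ht + 1 := GS_ht hab
      rw [hsum_cons]
      simp only [List.headI, List.length_cons] at ih2 ⊢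
      set L := t0.length + 1 with hL
      have h1 : (b.ht + L) * L ≤ (a.ht + 1 + L) * L :=
        Nat.mul_le_mul_right L (by omega)
      have h2 : (a.ht + (L + 1)) * (L + 1)
          = (a.ht + 1 + L) * L + (a.ht + 1 + L) := by ring
      omega

lemma merge_cls {u d : List (Gx X)} (hu : u ≠ []) (hd : d ≠ [])
    (hj : u.getLast? = d.head?) : clsL (mergeL u d) = clsL u * clsL d := by
  cases d with
  | nil => exact absurd rfl hd
  | cons j d2 =>
    have hlast : u.getLast? = some j := hj
    cases d2 with
    | nil =>
      show clsL (u ++ []) = clsL u * clsL [j]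
      rw [List.append_nil, clsL_singleton, last_absorb hlast]
    | cons c d0 =>
      show clsL (u ++ (c :: d0)) = clsL u * clsL (j :: c :: d0)
      rw [clsL_append hu (List.cons_ne_nil c d0),
        clsL_cons j (List.cons_ne_nil c d0), ← mul_assoc, last_absorb hlast]

lemma merge_chain {R : Gx X → Gx X → Prop} {u d : List (Gx X)}
    (hcu : u.Chain' R) (hcd : d.Chain' R)
    (hj : u.getLast? = d.head?) : (mergeL u d).Chain' R := by
  cases d with
  | nil => exact (by simpa [mergeL] using hcu)
  | cons j d2 =>
    refine List.IsChain.append hcu (hcd.tail) ?_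
    intro x hx y hy
    have hxj : x = j := by rw [hj] at hx; injection hx with h; exact h.symm
    subst hxj
    cases d2 with
    | nil => simp at hy
    | cons c d0 =>
      have : y = c := by simp at hy; exact hy.symm
      subst this
      exact (List.isChain_cons_cons.mp hcd).1

lemma merge_ne {u d : List (Gx X)} (hu : u ≠ []) : mergeL u d ≠ [] := by
  cases u with
  | nil => exact absurd rfl hu
  | cons a t => simp [mergeL]

end S3gs
section S3lam
variable {X : Type}

lemma lamL_spec : ∀ (n : ℕ) (g : Gx X), g.ht ≤ n →
    Gx.lamL g ≠ [] ∧ (Gx.lamL g).Chain' SUp ∧ (Gx.lamL g).head? = some Gx.gone ∧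
      (Gx.lamL g).getLast? = some g ∧ clsL (Gx.lamL g) = eG g := by
  intro n
  induction n with
  | zero =>
    intro g hg
    have hg0 : g = Gx.gone := ht_zero (Nat.le_zero.mp hg)
    subst hg0
    rw [Gx.lamL]
    have h0 : (Gx.gone : Gx X).ht = 0 := rfl
    rw [dif_neg (by omega), if_pos h0]
    exact ⟨by simp, List.isChain_singleton _, rfl, rfl, rfl⟩
  | succ n ih =>
    intro g hg
    by_cases h2 : 2 ≤ g.ht
    · have hc := Gx.ht_c_lt h2
      obtain ⟨hne, hch, hhd, hlast, hcls⟩ := ih g.c (by omega)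
      have hstep1 : SUp g.c g.l := ⟨c_step_l h2, ht_lc h2⟩
      have hstep2 : SUp g.l g := ⟨Or.inl rfl, ht_l (by omega)⟩
      rw [Gx.lamL, dif_pos h2]
      refine ⟨by simp, ?_, ?_, ?_, ?_⟩
      · refine List.IsChain.append hch (List.isChain_pair.mpr hstep2) ?_
        intro x hx y hy
        rw [hlast] at hx
        have : x = g.c := by injection hx with h; exact h.symm
        subst this
        have : y = g.l := by simp at hy; exact hy.symm
        subst this
        exact hstep1
      · cases hL : Gx.lamL g.c with
        | nil => exact absurd hL hne
        | cons z zs => rw [hL] at hhd; simpa using hhd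
      · rw [show Gx.lamL g.c ++ [g.l, g] = (Gx.lamL g.c ++ [g.l]) ++ [g] from by simp]
        exact List.getLast?_concat
      · rw [show Gx.lamL g.c ++ [g.l, g] = Gx.lamL g.c ++ ([g.l] ++ [g]) from by simp]
        rw [← List.append_assoc]
        rw [clsL_append (by simp [hne]) (List.cons_ne_nil g []),
          clsL_append hne (List.cons_ne_nil g.l []), clsL_singleton, clsL_singleton, hcls]
        exact relA h2
    · rw [Gx.lamL, dif_neg h2]
      by_cases h0 : g.ht = 0
      · have hg0 : g = Gx.gone := ht_zero h0
        rw [if_pos h0]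
        subst hg0
        exact ⟨by simp, List.isChain_singleton _, rfl, rfl, rfl⟩
      · rw [if_neg h0]
        have h1 : g.ht = 1 := by omega
        have hl1 := (ht_one h1).1
        refine ⟨by simp, ?_, rfl, rfl, ?_⟩
        · exact List.isChain_pair.mpr ⟨Or.inl hl1.symm, by have : (Gx.gone : Gx X).ht = 0 := rfl; omega⟩
        · rw [clsL_cons _ (List.cons_ne_nil g []), clsL_singleton]
          exact one_mul_eG g

lemma lamR_spec : ∀ (n : ℕ) (g : Gx X), g.ht ≤ n →
    Gx.lamR g ≠ [] ∧ (Gx.lamR g).Chain' SDown ∧ (Gx.lamR g).head? = some g ∧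
      (Gx.lamR g).getLast? = some Gx.gone ∧ clsL (Gx.lamR g) = eG g := by
  intro n
  induction n with
  | zero =>
    intro g hg
    have hg0 : g = Gx.gone := ht_zero (Nat.le_zero.mp hg)
    subst hg0
    rw [Gx.lamR]
    have h0 : (Gx.gone : Gx X).ht = 0 := rfl
    rw [dif_neg (by omega), if_pos h0]
    exact ⟨by simp, List.isChain_singleton _, rfl, rfl, rfl⟩
  | succ n ih =>
    intro g hg
    by_cases h2 : 2 ≤ g.ht
    · have hc := Gx.ht_c_lt h2
      obtain ⟨hne, hch, hhd, hlast, hcls⟩ := ih g.c (by omega)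
      have hrl : g.r.ht = g.c.ht + 1 := by
        have := ht_l (show 1 ≤ g.ht by omega)
        have := ht_r (show 1 ≤ g.ht by omega)
        have := ht_lc h2
        omega
      have hstep1 : SDown g g.r := ⟨Or.inr rfl, ht_r (by omega)⟩
      have hstep2 : SDown g.r g.c := ⟨c_step_r h2, hrl⟩
      rw [Gx.lamR, dif_pos h2]
      refine ⟨by simp, ?_, rfl, ?_, ?_⟩
      · show ([g, g.r] ++ Gx.lamR g.c).Chain' SDown
        refine List.IsChain.append ?_ hch ?_
        · exact List.isChain_pair.mpr hstep1
        · intro x hx y hy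
          have : x = g.r := by simp at hx; exact hx.symm
          subst this
          rw [hhd] at hy
          have : y = g.c := by injection hy with h; exact h.symm
          subst this
          exact hstep2
      · show ([g, g.r] ++ Gx.lamR g.c).getLast? = some Gx.gone
        cases hL : Gx.lamR g.c with
        | nil => exact absurd hL hne
        | cons z zs =>
          rw [hL] at hlast
          rw [List.getLast?_append_of_ne_nil _ (List.cons_ne_nil z zs)]
          exact hlast
      · show clsL ([g, g.r] ++ Gx.lamR g.c) = eG g
        rw [clsL_append (List.cons_ne_nil _ _) hne,
          clsL_cons _ (List.cons_ne_nil g.r []), clsL_singleton, hcls]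
        exact relB h2
    · rw [Gx.lamR, dif_neg h2]
      by_cases h0 : g.ht = 0
      · have hg0 : g = Gx.gone := ht_zero h0
        rw [if_pos h0]
        subst hg0
        exact ⟨by simp, List.isChain_singleton _, rfl, rfl, rfl⟩
      · rw [if_neg h0]
        have h1 : g.ht = 1 := by omega
        have hr1 := (ht_one h1).2
        refine ⟨by simp, ?_, rfl, rfl, ?_⟩
        · exact List.isChain_pair.mpr ⟨Or.inr hr1.symm, by have : (Gx.gone : Gx X).ht = 0 := rfl; omega⟩
        · rw [clsL_cons _ (List.cons_ne_nil _ []), clsL_singleton]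
          exact eG_mul_one g

end S3lam
section S3D
variable {X : Type}

lemma collapse3 {a b : Gx X} (h : Gx.stepDown a b) (r : List (Gx X)) :
    clsL (a :: b :: a :: r) = clsL (a :: r) := by
  have hK := K1 h
  cases r with
  | nil =>
    rw [clsL_cons a (List.cons_ne_nil b [a]), clsL_cons b (List.cons_ne_nil a []),
      clsL_singleton]
    rw [← mul_assoc]
    exact hK
  | cons x r0 =>
    rw [clsL_cons a (List.cons_ne_nil b _), clsL_cons b (List.cons_ne_nil a _),
      clsL_cons a (List.cons_ne_nil x r0)]
    have h' := congrArg (· * clsL (x :: r0)) hK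
    simp only [mul_assoc] at h'
    exact h'

lemma cls3swap {a b c d : Gx X} (h : eG a * eG b * eG c = eG a * eG d * eG c)
    (r : List (Gx X)) :
    clsL (a :: b :: c :: r) = clsL (a :: d :: c :: r) := by
  cases r with
  | nil =>
    rw [clsL_cons a (List.cons_ne_nil b [c]), clsL_cons b (List.cons_ne_nil c []),
      clsL_cons a (List.cons_ne_nil d [c]), clsL_cons d (List.cons_ne_nil c []),
      clsL_singleton]
    simp only [mul_assoc] at h
    exact h
  | cons x r0 =>
    rw [clsL_cons a (List.cons_ne_nil b _), clsL_cons b (List.cons_ne_nil c _),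
      clsL_cons c (List.cons_ne_nil x r0),
      clsL_cons a (List.cons_ne_nil d _), clsL_cons d (List.cons_ne_nil c _),
      clsL_cons c (List.cons_ne_nil x r0)]
    have h' := congrArg (· * clsL (x :: r0)) h
    simp only [mul_assoc] at h'
    exact h'

/-- output of the river-removal procedure -/
def DOut (w : List (Gx X)) : Prop :=
  ∃ u d : List (Gx X), u ≠ [] ∧ u.Chain' SUp ∧ d ≠ [] ∧ d.Chain' SDown ∧
    u.getLast? = d.head? ∧ u.head? = w.head? ∧
    clsL (mergeL u d) = clsL w ∧
    ((mergeL u d).length < w.length ∨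
      ((mergeL u d).length = w.length ∧ hsum w ≤ hsum (mergeL u d)))

theorem Dmain : ∀ (k m : ℕ) (w : List (Gx X)), w ≠ [] → w.Chain' GS →
    w.length ≤ k → (w.headI.ht + w.length) * w.length ≤ m + hsum w → DOut w := by
  intro k
  induction k with
  | zero =>
    intro m w hne _ hlen _
    cases w with
    | nil => exact absurd rfl hne
    | cons a t => simp at hlen
  | succ k ihk =>
    intro m
    induction m using Nat.strong_induction_on with
    | _ m ihm =>
    intro w hne hch hlen hmb
    cases w with
    | nil => exact absurd rfl hne
    | cons a t =>
    cases t with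
    | nil =>
      exact ⟨[a], [a], List.cons_ne_nil a [], List.isChain_singleton a,
        List.cons_ne_nil a [], List.isChain_singleton a, rfl, rfl, rfl,
        Or.inr ⟨rfl, le_refl _⟩⟩
    | cons b t0 =>
      have hstep : GS a b := (List.isChain_cons_cons.mp hch).1
      have hch' : (b :: t0).Chain' GS := (List.isChain_cons_cons.mp hch).2
      have hlen' : (b :: t0).length ≤ k := by
        simp only [List.length_cons] at hlen ⊢; omega
      obtain ⟨u, d, hune, hcu, hdne, hcd, hjun, hhead, hcls, hmeas⟩ :=
        ihk (((b :: t0).headI.ht + (b :: t0).length) * (b :: t0).length) (b :: t0)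
          (List.cons_ne_nil b t0) hch' hlen' (Nat.le_add_right _ _)
      obtain ⟨u2, rfl⟩ : ∃ u2, u = b :: u2 := by
        cases u with
        | nil => simp at hhead
        | cons x u2 =>
          have hxb : x = b := by simpa using hhead
          exact ⟨u2, by rw [hxb]⟩
      set M := mergeL (b :: u2) d with hM
      have hMne : M ≠ [] := merge_ne (List.cons_ne_nil b u2)
      have hMch : M.Chain' GS :=
        merge_chain (hcu.imp fun _ _ hx => Or.inl hx) (hcd.imp fun _ _ hx => Or.inr hx) hjun
      have hMlen : M.length ≤ (b :: t0).length := by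
        rcases hmeas with h | ⟨h, _⟩
        · exact Nat.le_of_lt h
        · exact Nat.le_of_eq h
      rcases hstep with hup | hdown
      · -- first step ascends
        refine ⟨a :: b :: u2, d, List.cons_ne_nil _ _,
          List.isChain_cons_cons.mpr ⟨hup, hcu⟩, hdne, hcd, ?_, rfl, ?_, ?_⟩
        · rw [List.getLast?_cons_cons]; exact hjun
        · show clsL (a :: M) = clsL (a :: b :: t0)
          rw [clsL_cons a hMne, hcls, ← clsL_cons a (List.cons_ne_nil b t0)]
        · have hx : mergeL (a :: b :: u2) d = a :: M := rfl
          rw [hx]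
          rcases hmeas with h | ⟨h1, h2⟩
          · left
            simp only [List.length_cons] at h ⊢
            omega
          · right
            refine ⟨?_, ?_⟩
            · simp only [List.length_cons] at h1 ⊢; omega
            · simp only [hsum_cons] at h2 ⊢; omega
      · -- first step descends
        cases u2 with
        | nil =>
          obtain ⟨d2, rfl⟩ : ∃ d2, d = b :: d2 := by
            cases d with
            | nil => exact absurd rfl hdne
            | cons x d2 =>
              have hxb : x = b := by simpa using hjun.symm
              exact ⟨d2, by rw [hxb]⟩
          have hMd : M = b :: d2 := by simp [hM, mergeL]
          refine ⟨[a], a :: b :: d2, List.cons_ne_nil _ _, List.isChain_singleton a,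
            List.cons_ne_nil _ _, List.isChain_cons_cons.mpr ⟨hdown, hcd⟩, rfl, rfl, ?_, ?_⟩
          · show clsL (mergeL [a] (a :: b :: d2)) = clsL (a :: b :: t0)
            have : mergeL [a] (a :: b :: d2) = a :: b :: d2 := by simp [mergeL]
            rw [this, clsL_cons a (List.cons_ne_nil b d2), ← hMd, hcls,
              ← clsL_cons a (List.cons_ne_nil b t0)]
          · show (mergeL [a] (a :: b :: d2)).length < _ ∨ _
            have hq : mergeL [a] (a :: b :: d2) = a :: b :: d2 := by simp [mergeL]
            rw [hq]
            have hlenM : M.length = d2.length + 1 := by rw [hMd]; simp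
            have hsumM : hsum M = b.ht + hsum d2 := by rw [hMd, hsum_cons]
            rcases hmeas with h | ⟨h1, h2⟩
            · left
              simp only [List.length_cons] at h ⊢
              omega
            · right
              refine ⟨?_, ?_⟩
              · simp only [List.length_cons] at h1 ⊢; omega
              · simp only [hsum_cons] at h2 ⊢; omega
        | cons b2 u3 =>
          have hupb : SUp b b2 := (List.isChain_cons_cons.mp hcu).1
          have hMr : M = b :: b2 :: (u3 ++ d.tail) := rfl
          set r := u3 ++ d.tail with hr
          have hclsaM : clsL (a :: M) = clsL (a :: b :: t0) := by
            rw [clsL_cons a hMne, hcls, ← clsL_cons a (List.cons_ne_nil b t0)]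
          have hchM2 : (b2 :: r).Chain' GS := by
            rw [hMr] at hMch; exact (List.isChain_cons_cons.mp hMch).2
          by_cases hac : a = b2
          · -- collapse the river a b a
            subst hac
            have hcol : clsL (a :: M) = clsL (a :: r) := by
              rw [hMr]; exact collapse3 hdown.stepDown r
            have hch2 : (a :: r).Chain' GS := hchM2
            have hMr2 : M.length = r.length + 2 := by rw [hMr]; simp
            have hlen2 : (a :: r).length ≤ k := by
              simp only [List.length_cons] at hlen hMlen hMr2 ⊢
              omega
            obtain ⟨u', d', h1, h2, h3, h4, h5, h6, h7, h8⟩ :=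
              ihk (((a :: r).headI.ht + (a :: r).length) * (a :: r).length) (a :: r)
                (List.cons_ne_nil a r) hch2 hlen2 (Nat.le_add_right _ _)
            refine ⟨u', d', h1, h2, h3, h4, h5, h6, ?_, ?_⟩
            · rw [h7, ← hcol, hclsaM]
            · left
              have hm1 : (mergeL u' d').length ≤ (a :: r).length := by
                rcases h8 with h | ⟨h, _⟩
                · exact Nat.le_of_lt h
                · exact Nat.le_of_eq h
              simp only [List.length_cons] at hm1 hMlen hMr2 ⊢
              omega
          · -- uplift the river a b b2
            obtain ⟨dd, hddl, hddc, hddr, hddht, hK2⟩ :=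
              K2 hdown.1 hupb.1 hdown.2 hupb.2 hac
            have hswap : clsL (a :: M) = clsL (a :: dd :: b2 :: r) := by
              rw [hMr]; exact cls3swap hK2 r
            have hhta : a.ht = b.ht + 1 := hdown.2
            have hhtb2 : b2.ht = b.ht + 1 := hupb.2
            have hch2 : (a :: dd :: b2 :: r).Chain' GS := by
              refine List.isChain_cons_cons.mpr ⟨Or.inl ⟨Or.inr hddr.symm, by omega⟩, ?_⟩
              refine List.isChain_cons_cons.mpr ⟨Or.inr ⟨Or.inl hddl.symm, by omega⟩, ?_⟩
              exact hchM2
            have hMlen2 : M.length = r.length + 2 := by rw [hMr]; simp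
            rcases hmeas with hlt | ⟨heq, hhs⟩
            · -- length dropped: use outer induction
              have hlen2 : (a :: dd :: b2 :: r).length ≤ k := by
                simp only [List.length_cons] at hlen hlt hMlen2 ⊢
                omega
              obtain ⟨u', d', h1, h2, h3, h4, h5, h6, h7, h8⟩ :=
                ihk (((a :: dd :: b2 :: r).headI.ht + (a :: dd :: b2 :: r).length)
                    * (a :: dd :: b2 :: r).length)
                  (a :: dd :: b2 :: r) (List.cons_ne_nil _ _) hch2 hlen2
                  (Nat.le_add_right _ _)
              refine ⟨u', d', h1, h2, h3, h4, h5, h6, ?_, ?_⟩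
              · rw [h7, ← hswap, hclsaM]
              · left
                have hm1 : (mergeL u' d').length ≤ (a :: dd :: b2 :: r).length := by
                  rcases h8 with h | ⟨h, _⟩
                  · exact Nat.le_of_lt h
                  · exact Nat.le_of_eq h
                simp only [List.length_cons] at hm1 hlt hMlen2 ⊢
                omega
            · -- same length: heights went up, use inner induction
              have hsM : hsum M = b.ht + (b2.ht + hsum r) := by
                rw [hMr]; simp only [hsum_cons]
              have hs2 : hsum (a :: b :: t0) + 2 ≤ hsum (a :: dd :: b2 :: r) := by
                simp only [hsum_cons] at hhs ⊢
                omega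
              have hlen3 : (a :: dd :: b2 :: r).length = (a :: b :: t0).length := by
                simp only [List.length_cons] at heq hMlen2 ⊢
                omega
              have hbound := hsum_le (a :: dd :: b2 :: r) hch2
              rw [hlen3] at hbound
              have hheadI : (a :: dd :: b2 :: r).headI = (a :: b :: t0).headI := rfl
              rw [hheadI] at hbound
              have hm2 : 2 ≤ m := by omega
              have hlen4 : (a :: dd :: b2 :: r).length ≤ k + 1 := by omega
              obtain ⟨u', d', h1, h2, h3, h4, h5, h6, h7, h8⟩ :=
                ihm (m - 2) (by omega) (a :: dd :: b2 :: r) (List.cons_ne_nil _ _)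
                  hch2 hlen4 (by rw [hlen3, hheadI]; omega)
              refine ⟨u', d', h1, h2, h3, h4, h5, h6, ?_, ?_⟩
              · rw [h7, ← hswap, hclsaM]
              · rcases h8 with h | ⟨hl, hs⟩
                · left; omega
                · right
                  constructor
                  · omega
                  · omega

end S3D
section S3fin
variable {X : Type}

lemma merge_head {u d : List (Gx X)} (hu : u ≠ []) :
    (mergeL u d).head? = u.head? := by
  cases u with
  | nil => exact absurd rfl hu
  | cons a t => rfl

lemma merge_last {u d : List (Gx X)} (hd : d ≠ []) (hj : u.getLast? = d.head?) :
    (mergeL u d).getLast? = d.getLast? := by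
  cases d with
  | nil => exact absurd rfl hd
  | cons j d2 =>
    cases d2 with
    | nil =>
      show (u ++ []).getLast? = [j].getLast?
      rw [List.append_nil]
      exact hj
    | cons c d0 =>
      show (u ++ (c :: d0)).getLast? = (j :: c :: d0).getLast?
      rw [List.getLast?_append_of_ne_nil _ (List.cons_ne_nil c d0),
        List.getLast?_cons_cons]

lemma exists_mtn_word (u : Wd X) : ∃ w : List (Gx X), w ≠ [] ∧ w.Chain' GS ∧
    w.head? = some Gx.gone ∧ w.getLast? = some Gx.gone ∧ clsL w = cls u := by
  induction u using FreeSemigroup.recOnMul with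
  | ih1 g =>
    obtain ⟨hLne, hLch, hLhd, hLlast, hLcls⟩ := lamL_spec g.ht g le_rfl
    obtain ⟨hRne, hRch, hRhd, hRlast, hRcls⟩ := lamR_spec g.ht g le_rfl
    have hj : (Gx.lamL g).getLast? = (Gx.lamR g).head? := by rw [hLlast, hRhd]
    refine ⟨mergeL (Gx.lamL g) (Gx.lamR g), merge_ne hLne,
      merge_chain (hLch.imp fun _ _ hx => Or.inl hx) (hRch.imp fun _ _ hx => Or.inr hx) hj,
      ?_, ?_, ?_⟩
    · rw [merge_head hLne, hLhd]
    · rw [merge_last hRne hj, hRlast]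
    · rw [merge_cls hLne hRne hj, hLcls, hRcls]
      exact eG_idem g
  | ih2 x y hx hy =>
    obtain ⟨w1, h1ne, h1ch, h1hd, h1last, h1cls⟩ := hx
    obtain ⟨w2, h2ne, h2ch, h2hd, h2last, h2cls⟩ := hy
    have hj : w1.getLast? = w2.head? := by rw [h1last, h2hd]
    refine ⟨mergeL w1 w2, merge_ne h1ne, merge_chain h1ch h2ch hj, ?_, ?_, ?_⟩
    · rw [merge_head h1ne, h1hd]
    · rw [merge_last h2ne hj, h2last]
    · rw [merge_cls h1ne h2ne hj, h1cls, h2cls]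
      rfl

/-- both inverse identities for an up-down landscape -/
lemma main15 {u d : List (Gx X)} (hu : IsUphillL u) (hd : IsDownhillL d)
    (hj : u.getLast? = d.head?) :
    cls (Wd.ofL (mergeL u d)) * cls (Wd.ofL (mergeL u d).reverse) *
        cls (Wd.ofL (mergeL u d)) = cls (Wd.ofL (mergeL u d)) ∧
    cls (Wd.ofL (mergeL u d).reverse) * cls (Wd.ofL (mergeL u d)) *
        cls (Wd.ofL (mergeL u d).reverse) = cls (Wd.ofL (mergeL u d).reverse) := by
  constructor
  · exact main15core hu hd hj
  · have hu2 : IsUphillL d.reverse := ⟨by simpa using hd.1, stepRev' hd.2⟩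
    have hd2 : IsDownhillL u.reverse := ⟨by simpa using hu.1, stepRev hu.2⟩
    have hj2 : d.reverse.getLast? = u.reverse.head? := by
      rw [List.getLast?_reverse, List.head?_reverse]
      exact hj.symm
    have hrev : mergeL d.reverse u.reverse = (mergeL u d).reverse :=
      (merge_reverse hu.1 hd.1 hj).symm
    have := main15core hu2 hd2 hj2
    rw [hrev, List.reverse_reverse] at this
    exact this

end S3fin

lemma exists_mtn {X : Type} (a : FT1 X) : ∃ w : List (Gx X), w ≠ [] ∧ w.Chain' GS ∧
    w.head? = some Gx.gone ∧ w.getLast? = some Gx.gone ∧ clsL w = a := by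
  induction a using Con.induction_on with
  | H u => exact exists_mtn_word u
theorem statement3 {X : Type} [Nonempty X] :
    (∀ g : Gx X, cls (Wd.og g) * cls (Wd.og g) = cls (Wd.og g)) ∧
    (∀ a : FT1 X, cls (Wd.og Gx.gone) * a = a ∧ a * cls (Wd.og Gx.gone) = a) ∧
    Subsemigroup.closure (Set.range fun g : Gx X => cls (Wd.og g)) = (⊤ : Subsemigroup (FT1 X)) ∧
    (∀ a : FT1 X, ∃ b : FT1 X, a * b * a = a ∧ b * a * b = b) ∧
    (∀ u d : List (Gx X), IsUphillL u → IsDownhillL d → u.getLast? = d.head? →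
      cls (Wd.ofL (mergeL u d)) * cls (Wd.ofL (mergeL u d).reverse) * cls (Wd.ofL (mergeL u d)) =
        cls (Wd.ofL (mergeL u d)) ∧
      cls (Wd.ofL (mergeL u d).reverse) * cls (Wd.ofL (mergeL u d)) *
          cls (Wd.ofL (mergeL u d).reverse) =
        cls (Wd.ofL (mergeL u d).reverse)) := by
  refine ⟨eG_idem, ?_, ?_, ?_, fun u d hu hd hj => main15 hu hd hj⟩
  · intro a
    induction a using Con.induction_on with
    | H u => exact ⟨one_mul_cls u, cls_mul_one u⟩
  · rw [Subsemigroup.eq_top_iff']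
    intro x
    induction x using Con.induction_on with
    | H u =>
      induction u using FreeSemigroup.recOnMul with
      | ih1 g => exact Subsemigroup.subset_closure ⟨g, rfl⟩
      | ih2 x y hx hy => exact Subsemigroup.mul_mem _ hx hy
  · intro a
    obtain ⟨w, hwne, hwch, _, _, hwcls⟩ := exists_mtn a
    obtain ⟨u, d, h1, h2, h3, h4, h5, h6, h7, h8⟩ :=
      Dmain w.length ((w.headI.ht + w.length) * w.length) w hwne hwch le_rfl
        (Nat.le_add_right _ _)
    have ha : a = cls (Wd.ofL (mergeL u d)) := by rw [← hwcls]; exact h7.symm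
    have hmain := main15 (u := u) (d := d) ⟨h1, h2.imp fun _ _ hx => hx.stepUp⟩
      ⟨h3, h4.imp fun _ _ hx => hx.stepDown⟩ h5
    exact ⟨cls (Wd.ofL (mergeL u d).reverse), by rw [ha]; exact hmain.1,
      by rw [ha]; exact hmain.2⟩
end
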